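/- With constant impact λ^(n) = λ > 0 for all n, zero risk aversion φ = 0, and α = 1, the backward recursion μ^(n) = 2λ − λ²·4/(4μ^(n+1)) = 2λ − λ²/μ^(n+1) with μ^(N) = 2λ has the closed-form solution μ^(n) = λ(N − n + 2)/(N − n + 1), and the resulting optimal fractions θ^(n) = 1 − λ·2/(2μ^(n+1)) = 1/(N − n + 1) yield the TWAP strategy (equal trade sizes x^(n) = Q/N each period). -/

import Mathlib

theorem twap_closed_form (N : ℕ) (hN : 1 ≤ N) (lam Q0 : ℝ) (hlam : 0 < lam)
    (mu theta Qf : ℕ → ℝ)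
    (hmuN : mu N = 2 * lam)
    (hmu : ∀ n, 1 ≤ n → n < N → mu n = 2 * lam - lam ^ 2 / mu (n + 1))
    (htheta : ∀ n, 1 ≤ n → n < N → theta n = 1 - lam / mu (n + 1))
    (hthetaN : theta N = 1)
    (hQ1 : Qf 1 = Q0)
    (hQ : ∀ n, 1 ≤ n → n < N → Qf (n + 1) = Qf n - theta n * Qf n) :
    ∀ n, 1 ≤ n → n ≤ N →
      mu n = lam * ((N : ℝ) - n + 2) / ((N : ℝ) - n + 1) ∧
      theta n = 1 / ((N : ℝ) - n + 1) ∧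
      theta n * Qf n = Q0 / N := by
  have hlam' : lam ≠ 0 := ne_of_gt hlam
  -- closed form for mu, by induction on k = N - n
  have hmu' : ∀ k n : ℕ, 1 ≤ n → n + k = N →
      mu n = lam * ((k : ℝ) + 2) / ((k : ℝ) + 1) := by
    intro k
    induction k with
    | zero =>
      intro n h1 h2
      simp only [Nat.add_zero] at h2
      subst h2
      rw [hmuN]; push_cast; ring
    | succ k ih =>
      intro n h1 h2
      have hn : n < N := by omega
      have hnext := ih (n + 1) (by omega) (by omega)
      rw [hmu n h1 hn, hnext]
      have hk1 : ((k : ℝ) + 1) ≠ 0 := by positivity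
      have hk2 : ((k : ℝ) + 2) ≠ 0 := by positivity
      have hk3 : ((k : ℝ) + 1 + 1) ≠ 0 := by positivity
      push_cast
      field_simp
      ring
  -- mu closed form in terms of N - n over ℝ
  have hmuR : ∀ n : ℕ, 1 ≤ n → n ≤ N →
      mu n = lam * ((N : ℝ) - n + 2) / ((N : ℝ) - n + 1) := by
    intro n h1 h2
    have := hmu' (N - n) n h1 (by omega)
    rw [this]
    have : ((N - n : ℕ) : ℝ) = (N : ℝ) - n := by
      rw [Nat.cast_sub h2]
    rw [this]
  -- theta closed form
  have hthetaR : ∀ n : ℕ, 1 ≤ n → n ≤ N →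
      theta n = 1 / ((N : ℝ) - n + 1) := by
    intro n h1 h2
    rcases eq_or_lt_of_le h2 with rfl | hlt
    · rw [hthetaN]; simp
    · have hn1 : (n : ℝ) + 1 ≤ N := by exact_mod_cast hlt
      have hd1 : (N : ℝ) - n ≠ 0 := by nlinarith
      have hd3 : (N : ℝ) - n + 1 ≠ 0 := by nlinarith
      have hM : mu (n + 1) = lam * ((N : ℝ) - n + 1) / ((N : ℝ) - n) := by
        rw [hmuR (n + 1) (by omega) (by omega)]
        push_cast; ring_nf
      rw [htheta n h1 hlt, hM]
      field_simp
      ring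
  -- Qf closed form
  have hNne : (N : ℝ) ≠ 0 := by
    have : (1 : ℝ) ≤ N := by exact_mod_cast hN
    linarith
  have hQf : ∀ n : ℕ, 1 ≤ n → n ≤ N → Qf n = Q0 * ((N : ℝ) - n + 1) / N := by
    intro n h1
    induction n, h1 using Nat.le_induction with
    | base =>
      intro _
      rw [hQ1]; push_cast; field_simp; ring
    | succ n hn ih =>
      intro h2
      have hlt : n < N := by omega
      have hd : (N : ℝ) - n + 1 ≠ 0 := by
        have : (n : ℝ) ≤ N := by exact_mod_cast hlt.le
        nlinarith
      rw [hQ n hn hlt, hthetaR n hn hlt.le, ih hlt.le]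
      push_cast
      field_simp
      ring
  intro n h1 h2
  have hd : (N : ℝ) - n + 1 ≠ 0 := by
    have : (n : ℝ) ≤ N := by exact_mod_cast h2
    nlinarith
  refine ⟨hmuR n h1 h2, hthetaR n h1 h2, ?_⟩
  rw [hthetaR n h1 h2, hQf n h1 h2]
  field_simp
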